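/- The flux carrier g is smooth on Ω and satisfies: (i) div g = ∂_{x₁} g₁ + ∂_{x₂} g₂ = 0 in Ω; (ii) g(x) = 0 at every x ∈ Ω with x₂ ≤ f̄(x₁) and at every x with (f₂(x₁)−x₂)/(x₂−f̄(x₁)) < e^{−1/ε}; in particular g vanishes in a neighborhood of ∂Ω; (iii) ∫_{f₁(x₁)}^{f₂(x₁)} g₁(x₁,x₂) dx₂ = Φ for every x₁ ∈ ℝ. -/

import Mathlib

open MeasureTheory Set

/-- The channel `Ω = {(x₁,x₂) : f₁(x₁) < x₂ < f₂(x₁)}`. -/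
def channel (f₁ f₂ : ℝ → ℝ) : Set (ℝ × ℝ) :=
  {x : ℝ × ℝ | f₁ x.1 < x.2 ∧ x.2 < f₂ x.1}

/-- The stream function `G` of the flux carrier. -/
noncomputable def Gfun (μ f₁ f₂ : ℝ → ℝ) (ε Φ : ℝ) (x : ℝ × ℝ) : ℝ :=
  if (f₁ x.1 + f₂ x.1) / 2 < x.2 then
    Φ * μ (1 + ε * Real.log ((f₂ x.1 - x.2) / (x.2 - (f₁ x.1 + f₂ x.1) / 2)))
  else 0

/-- The first component `g₁ = ∂_{x₂} G` of the flux carrier. -/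
noncomputable def gfun₁ (μ f₁ f₂ : ℝ → ℝ) (ε Φ : ℝ) (x : ℝ × ℝ) : ℝ :=
  fderiv ℝ (Gfun μ f₁ f₂ ε Φ) x (0, 1)

/-- The second component `g₂ = −∂_{x₁} G` of the flux carrier. -/
noncomputable def gfun₂ (μ f₁ f₂ : ℝ → ℝ) (ε Φ : ℝ) (x : ℝ × ℝ) : ℝ :=
  -(fderiv ℝ (Gfun μ f₁ f₂ ε Φ) x (1, 0))

/-- basic properties of the flux carrier `g = (∂_{x₂}G, −∂_{x₁}G)`:
it is smooth and divergence free in `Ω`, vanishes where `x₂ ≤ f̄(x₁)` and where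
`(f₂(x₁)−x₂)/(x₂−f̄(x₁)) < e^{−1/ε}` (in particular in a neighborhood of `∂Ω`),
and carries flux `Φ` through every cross-section. -/
theorem stmt_8 (μ : ℝ → ℝ)
    (hμsmooth : ContDiff ℝ (⊤ : ℕ∞) μ) (hμanti : Antitone μ)
    (hμ₁ : ∀ t : ℝ, t ≤ 0 → μ t = 1) (hμ₀ : ∀ t : ℝ, 1 ≤ t → μ t = 0)
    (f₁ f₂ : ℝ → ℝ) (d β : ℝ)
    (hf₁ : ContDiff ℝ (⊤ : ℕ∞) f₁) (hf₂ : ContDiff ℝ (⊤ : ℕ∞) f₂)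
    (hd : 0 < d) (hfd : ∀ x₁ : ℝ, d ≤ f₂ x₁ - f₁ x₁)
    (hβ₁ : ∀ x₁ : ℝ, |deriv f₁ x₁| ≤ β) (hβ₂ : ∀ x₁ : ℝ, |deriv f₂ x₁| ≤ β)
    (ε Φ : ℝ) (hε : ε ∈ Ioo (0 : ℝ) 1) (hΦ : 0 ≤ Φ) :
    -- (i) `g` is smooth and divergence free in `Ω`
    ContDiffOn ℝ (⊤ : ℕ∞) (gfun₁ μ f₁ f₂ ε Φ) (channel f₁ f₂) ∧
    ContDiffOn ℝ (⊤ : ℕ∞) (gfun₂ μ f₁ f₂ ε Φ) (channel f₁ f₂) ∧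
    (∀ x ∈ channel f₁ f₂,
      fderiv ℝ (gfun₁ μ f₁ f₂ ε Φ) x (1, 0) + fderiv ℝ (gfun₂ μ f₁ f₂ ε Φ) x (0, 1) = 0) ∧
    -- (ii) `g` vanishes below the middle curve and close to the upper boundary
    (∀ x ∈ channel f₁ f₂,
      (x.2 ≤ (f₁ x.1 + f₂ x.1) / 2 ∨
        (f₂ x.1 - x.2) / (x.2 - (f₁ x.1 + f₂ x.1) / 2) < Real.exp (-1 / ε)) →
      gfun₁ μ f₁ f₂ ε Φ x = 0 ∧ gfun₂ μ f₁ f₂ ε Φ x = 0) ∧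
    -- in particular `g` vanishes in a neighborhood of `∂Ω`
    (∀ x ∈ frontier (channel f₁ f₂),
      ∀ᶠ y in nhds x, gfun₁ μ f₁ f₂ ε Φ y = 0 ∧ gfun₂ μ f₁ f₂ ε Φ y = 0) ∧
    -- (iii) the flux constraint
    (∀ x₁ : ℝ, (∫ x₂ in (f₁ x₁)..(f₂ x₁), gfun₁ μ f₁ f₂ ε Φ (x₁, x₂)) = Φ) := by

  obtain ⟨hε0, hε1⟩ := hε
  have htop : ((⊤:ℕ∞) : WithTop ℕ∞) + 1 ≤ ((⊤:ℕ∞) : WithTop ℕ∞) := by exact_mod_cast le_refl _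
  have hone : (1 : WithTop ℕ∞) ≤ ((⊤:ℕ∞) : WithTop ℕ∞) := by exact_mod_cast le_top
  set G := Gfun μ f₁ f₂ ε Φ with hG
  set e : ℝ := Real.exp (-1/ε) with hee
  have he0 : 0 < e := Real.exp_pos _
  have hm2 : ∀ t, (f₁ t + f₂ t)/2 < f₂ t := fun t => by have := hfd t; linarith
  have hm1 : ∀ t, f₁ t < (f₁ t + f₂ t)/2 := fun t => by have := hfd t; linarith
  have hc1 : Continuous f₁ := hf₁.continuous
  have hc2 : Continuous f₂ := hf₂.continuous
  -- the three regions
  set U₀ : Set (ℝ × ℝ) := {y | y.2 < ((f₁ y.1 + f₂ y.1)/2 + f₂ y.1)/2} with hU₀def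
  set U₂ : Set (ℝ × ℝ) := {y | (f₁ y.1 + f₂ y.1)/2 < y.2 ∧
      |f₂ y.1 - y.2| < (y.2 - (f₁ y.1 + f₂ y.1)/2) * e} with hU₂def
  have hU₀open : IsOpen U₀ := isOpen_lt (by fun_prop) (by fun_prop)
  have hU₂open : IsOpen U₂ := by
    apply IsOpen.and
    · exact isOpen_lt (by fun_prop) (by fun_prop)
    · exact isOpen_lt (by fun_prop) (by fun_prop)
  -- G = 0 on U₀
  have hG0 : ∀ y ∈ U₀, G y = 0 := by
    intro y hy
    have hy' : y.2 < ((f₁ y.1 + f₂ y.1)/2 + f₂ y.1)/2 := hy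
    rw [hG, Gfun]
    split_ifs with h
    · rw [hμ₀, mul_zero]
      have hden : (0:ℝ) < y.2 - (f₁ y.1 + f₂ y.1)/2 := by linarith
      have hr : (1:ℝ) ≤ (f₂ y.1 - y.2) / (y.2 - (f₁ y.1 + f₂ y.1)/2) := by
        rw [le_div_iff₀ hden]; linarith
      have hl : 0 ≤ Real.log ((f₂ y.1 - y.2) / (y.2 - (f₁ y.1 + f₂ y.1)/2)) := Real.log_nonneg hr
      nlinarith
    · rfl
  -- G = Φ on U₂ off the graph of f₂
  have hGΦ : ∀ y : ℝ × ℝ, y ∈ U₂ → f₂ y.1 ≠ y.2 → G y = Φ := by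
    intro y hy h3
    obtain ⟨h1, h2⟩ := hy
    rw [hG, Gfun, if_pos h1]
    have hden : (0:ℝ) < y.2 - (f₁ y.1 + f₂ y.1)/2 := by linarith
    set r := (f₂ y.1 - y.2) / (y.2 - (f₁ y.1 + f₂ y.1)/2) with hr
    have hrne : r ≠ 0 := div_ne_zero (sub_ne_zero.mpr h3) (ne_of_gt hden)
    have habs : |r| < e := by
      rw [hr, abs_div, abs_of_pos hden, div_lt_iff₀ hden]; linarith
    have hlog : Real.log r < -1/ε := by
      have h5 : Real.log |r| < Real.log e := Real.log_lt_log (abs_pos.mpr hrne) habs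
      rwa [Real.log_abs, hee, Real.log_exp] at h5
    have harg : 1 + ε * Real.log r ≤ 0 := by
      have h6 : ε * Real.log r < ε * (-1/ε) := mul_lt_mul_of_pos_left hlog hε0
      have h7 : ε * (-1/ε) = -1 := by field_simp
      linarith
    rw [hμ₁ _ harg, mul_one]
  -- locally constant implies vanishing derivative
  have hfz : ∀ (c : ℝ) (U : Set (ℝ × ℝ)), IsOpen U → (∀ y ∈ U, G y = c) →
      ∀ y ∈ U, fderiv ℝ G y = 0 := by
    intro c U hU hGc y hy
    have hEq : G =ᶠ[nhds y] fun _ => c :=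
      Filter.eventuallyEq_of_mem (hU.mem_nhds hy) (fun z hz => hGc z hz)
    rw [hEq.fderiv_eq, fderiv_fun_const]
    rfl
  -- smoothness of G at any point below the graph of f₂
  have hGs : ∀ y : ℝ × ℝ, y.2 < f₂ y.1 → ContDiffAt ℝ (⊤:ℕ∞) G y := by
    intro y h2
    by_cases hc : (f₁ y.1 + f₂ y.1)/2 < y.2
    · -- middle region: smooth formula
      have hV : IsOpen {z : ℝ × ℝ | (f₁ z.1 + f₂ z.1)/2 < z.2 ∧ z.2 < f₂ z.1} := by
        apply IsOpen.and
        · exact isOpen_lt (by fun_prop) (by fun_prop)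
        · exact isOpen_lt (by fun_prop) (by fun_prop)
      have hEq : G =ᶠ[nhds y]
          fun z => Φ * μ (1 + ε * Real.log ((f₂ z.1 - z.2)/(z.2 - (f₁ z.1 + f₂ z.1)/2))) := by
        refine Filter.eventuallyEq_of_mem (hV.mem_nhds ⟨hc, h2⟩) (fun z hz => ?_)
        rw [hG, Gfun, if_pos hz.1]
      have hden : (0:ℝ) < y.2 - (f₁ y.1 + f₂ y.1)/2 := by linarith
      have hnum : (0:ℝ) < f₂ y.1 - y.2 := by linarith
      have hqs : ContDiffAt ℝ (⊤:ℕ∞)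
          (fun z : ℝ × ℝ => (f₂ z.1 - z.2)/(z.2 - (f₁ z.1 + f₂ z.1)/2)) y := by
        apply ContDiffAt.div
        · exact ((hf₂.comp contDiff_fst).sub contDiff_snd).contDiffAt
        · exact (contDiff_snd.sub (((hf₁.comp contDiff_fst).add
            (hf₂.comp contDiff_fst)).div_const 2)).contDiffAt
        · exact ne_of_gt hden
      have hrpos : (0:ℝ) < (f₂ y.1 - y.2)/(y.2 - (f₁ y.1 + f₂ y.1)/2) := div_pos hnum hden
      have hlogs : ContDiffAt ℝ (⊤:ℕ∞)
          (fun z : ℝ × ℝ => Real.log ((f₂ z.1 - z.2)/(z.2 - (f₁ z.1 + f₂ z.1)/2))) y :=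
        ContDiffAt.comp (g := Real.log) y (Real.contDiffAt_log.2 (ne_of_gt hrpos)) hqs
      have hrep : ContDiffAt ℝ (⊤:ℕ∞)
          (fun z : ℝ × ℝ =>
            Φ * μ (1 + ε * Real.log ((f₂ z.1 - z.2)/(z.2 - (f₁ z.1 + f₂ z.1)/2)))) y := by
        apply ContDiffAt.mul contDiffAt_const
        exact hμsmooth.contDiffAt.comp y (contDiffAt_const.add (contDiffAt_const.mul hlogs))
      exact hrep.congr_of_eventuallyEq hEq
    · -- lower region: locally zero
      have hy0 : y ∈ U₀ := by
        simp only [hU₀def, mem_setOf_eq]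
        push_neg at hc
        have := hm2 y.1
        linarith
      exact contDiffAt_const.congr_of_eventuallyEq
        (Filter.eventuallyEq_of_mem (hU₀open.mem_nhds hy0) (fun z hz => hG0 z hz))
  -- vanishing of the derivative on all of U₂
  have hgU₂ : ∀ y ∈ U₂, fderiv ℝ G y = 0 := by
    intro y hy
    by_cases hy2 : f₂ y.1 = y.2
    · -- on the graph of f₂
      by_cases hΦ0 : Φ = 0
      · have hGall : G = fun _ => 0 := by
          funext z; rw [hG, Gfun]; split_ifs <;> simp [hΦ0]
        rw [hGall, fderiv_fun_const]
        rfl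
      · apply fderiv_zero_of_not_differentiableAt
        intro hdiff
        have hcont := hdiff.continuousAt
        have hGy : G y = 0 := by
          rw [hG, Gfun, if_pos hy.1, hy2]
          simp [hμ₀ 1 le_rfl]
        have hpath : Filter.Tendsto (fun t : ℝ => ((y.1, y.2 + t) : ℝ × ℝ))
            (nhdsWithin 0 (Ioi 0)) (nhds y) := by
          have h8 : Filter.Tendsto (fun t : ℝ => ((y.1, y.2 + t) : ℝ × ℝ)) (nhds 0) (nhds (y.1, y.2 + 0)) :=
            (Continuous.tendsto (by fun_prop) 0)
          simpa using h8.mono_left nhdsWithin_le_nhds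
        have hlim : Filter.Tendsto (fun t : ℝ => G (y.1, y.2 + t))
            (nhdsWithin 0 (Ioi 0)) (nhds 0) := by
          have h10 := (hcont.tendsto).comp hpath
          rw [hGy] at h10
          exact h10
        have hevΦ : ∀ᶠ t in nhdsWithin 0 (Ioi 0), G (y.1, y.2 + t) = Φ := by
          have hden : (0:ℝ) < y.2 - (f₁ y.1 + f₂ y.1)/2 := by
            have := hy.1; linarith
          have hmem : Ioo (0:ℝ) ((y.2 - (f₁ y.1 + f₂ y.1)/2) * e) ∈ nhdsWithin (0:ℝ) (Ioi 0) :=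
            Ioo_mem_nhdsGT_of_mem ⟨le_refl _, by positivity⟩
          filter_upwards [hmem] with t ht
          have ht1 : (0:ℝ) < t := ht.1
          have hmem2 : ((y.1, y.2 + t) : ℝ × ℝ) ∈ U₂ := by
            simp only [hU₂def, mem_setOf_eq]
            constructor
            · linarith [hy.1]
            · have habs : |f₂ y.1 - (y.2 + t)| = t := by
                rw [hy2, show y.2 - (y.2 + t) = -t from by ring, abs_neg, abs_of_pos ht1]
              rw [habs]
              nlinarith [ht.2, he0, mul_pos ht1 he0]
          have hne : f₂ ((y.1, y.2 + t) : ℝ × ℝ).1 ≠ ((y.1, y.2 + t) : ℝ × ℝ).2 := by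
            show f₂ y.1 ≠ y.2 + t
            rw [hy2]
            intro hcon
            linarith
          exact hGΦ _ hmem2 hne
        have hlimΦ : Filter.Tendsto (fun _ : ℝ => Φ) (nhdsWithin 0 (Ioi 0)) (nhds 0) :=
          hlim.congr' hevΦ
        exact hΦ0 (tendsto_nhds_unique tendsto_const_nhds hlimΦ)
    · -- off the graph: G is locally Φ
      have hopen : IsOpen (U₂ ∩ {z : ℝ × ℝ | f₂ z.1 ≠ z.2}) :=
        hU₂open.inter (isOpen_ne_fun (by fun_prop) (by fun_prop))
      have hEq : G =ᶠ[nhds y] fun _ => Φ :=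
        Filter.eventuallyEq_of_mem (hopen.mem_nhds ⟨hy, hy2⟩) (fun z hz => hGΦ z hz.1 hz.2)
      rw [hEq.fderiv_eq, fderiv_fun_const]
      rfl
  -- conversions between gfun and fderiv of G
  have heqg₁ : ∀ y : ℝ × ℝ, gfun₁ μ f₁ f₂ ε Φ y = fderiv ℝ G y (0, 1) := fun y => by
    rw [hG]; rfl
  have heqg₂ : ∀ y : ℝ × ℝ, gfun₂ μ f₁ f₂ ε Φ y = -(fderiv ℝ G y (1, 0)) := fun y => by
    rw [hG]; rfl
  have hzero : ∀ y : ℝ × ℝ, fderiv ℝ G y = 0 →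
      gfun₁ μ f₁ f₂ ε Φ y = 0 ∧ gfun₂ μ f₁ f₂ ε Φ y = 0 := by
    intro y hy
    rw [heqg₁, heqg₂, hy]
    simp
  have hg₁smooth : ∀ y : ℝ × ℝ, y.2 < f₂ y.1 →
      ContDiffAt ℝ (⊤:ℕ∞) (gfun₁ μ f₁ f₂ ε Φ) y := by
    intro y hy
    have heq : gfun₁ μ f₁ f₂ ε Φ = fun z => fderiv ℝ G z ((0:ℝ), (1:ℝ)) := by
      funext z; rw [heqg₁]
    rw [heq]
    exact ((hGs y hy).fderiv_right htop).clm_apply contDiffAt_const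
  have hg₂smooth : ∀ y : ℝ × ℝ, y.2 < f₂ y.1 →
      ContDiffAt ℝ (⊤:ℕ∞) (gfun₂ μ f₁ f₂ ε Φ) y := by
    intro y hy
    have heq : gfun₂ μ f₁ f₂ ε Φ = fun z => -(fderiv ℝ G z ((1:ℝ), (0:ℝ))) := by
      funext z; rw [heqg₂]
    rw [heq]
    exact (((hGs y hy).fderiv_right htop).clm_apply contDiffAt_const).neg
  have hch_open : IsOpen (channel f₁ f₂) := by
    have hch : channel f₁ f₂ = {x : ℝ × ℝ | f₁ x.1 < x.2} ∩ {x : ℝ × ℝ | x.2 < f₂ x.1} := rfl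
    rw [hch]
    exact (isOpen_lt (by fun_prop) (by fun_prop)).inter (isOpen_lt (by fun_prop) (by fun_prop))
  refine ⟨?_, ?_, ?_, ?_, ?_, ?_⟩
  · -- g₁ smooth
    exact fun x hx => (hg₁smooth x hx.2).contDiffWithinAt
  · -- g₂ smooth
    exact fun x hx => (hg₂smooth x hx.2).contDiffWithinAt
  · -- divergence free
    intro x hx
    have hev : ∀ᶠ y in nhds x, HasFDerivAt G (fderiv ℝ G y) y := by
      filter_upwards [hch_open.mem_nhds hx] with y hy
      exact ((hGs y hy.2).differentiableAt (by simp)).hasFDerivAt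
    have hdF : DifferentiableAt ℝ (fderiv ℝ G) x :=
      ((hGs x hx.2).fderiv_right htop).differentiableAt (by simp)
    have hsymm := second_derivative_symmetric_of_eventually hev hdF.hasFDerivAt
    have heq1 : gfun₁ μ f₁ f₂ ε Φ = fun z => fderiv ℝ G z ((0:ℝ), (1:ℝ)) := by
      funext z; rw [heqg₁]
    have heq2 : gfun₂ μ f₁ f₂ ε Φ = fun z => -(fderiv ℝ G z ((1:ℝ), (0:ℝ))) := by
      funext z; rw [heqg₂]
    rw [heq1, heq2]
    rw [fderiv_clm_apply hdF (differentiableAt_const _)]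
    rw [fderiv_fun_neg]
    rw [fderiv_clm_apply hdF (differentiableAt_const _)]
    simp [hsymm (0, 1) (1, 0)]
  · -- vanishing on the two regions
    intro x hx hcase
    by_cases hle : x.2 ≤ (f₁ x.1 + f₂ x.1) / 2
    · have hx0 : x ∈ U₀ := by
        simp only [hU₀def, mem_setOf_eq]
        have := hm2 x.1
        linarith
      exact hzero x (hfz 0 U₀ hU₀open hG0 x hx0)
    · push_neg at hle
      rcases hcase with h | h
      · exact absurd h (not_le.mpr hle)
      · have hden : (0:ℝ) < x.2 - (f₁ x.1 + f₂ x.1)/2 := by linarith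
        have hx2 : x ∈ U₂ := by
          refine ⟨hle, ?_⟩
          rw [abs_of_pos (by linarith [hx.2] : (0:ℝ) < f₂ x.1 - x.2)]
          have := (div_lt_iff₀ hden).mp h
          linarith [mul_comm (x.2 - (f₁ x.1 + f₂ x.1)/2) e]
        exact hzero x (hgU₂ x hx2)
  · -- vanishing near the boundary
    intro x hx
    have hxcl : f₁ x.1 ≤ x.2 ∧ x.2 ≤ f₂ x.1 := by
      have hclosed : IsClosed ({y : ℝ × ℝ | f₁ y.1 ≤ y.2} ∩ {y : ℝ × ℝ | y.2 ≤ f₂ y.1}) :=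
        (isClosed_le (by fun_prop) (by fun_prop)).inter (isClosed_le (by fun_prop) (by fun_prop))
      exact closure_minimal (fun y hy => mem_inter (le_of_lt hy.1) (le_of_lt hy.2)) hclosed
        (frontier_subset_closure hx)
    have hxnot : x ∉ channel f₁ f₂ := by
      intro hxin
      rw [frontier, hch_open.interior_eq] at hx
      exact hx.2 hxin
    by_cases hb : x.2 < f₂ x.1
    · -- bottom: x₂ = f₁ x₁
      have hxf₁ : x.2 ≤ f₁ x.1 := by
        by_contra hcon
        exact hxnot ⟨not_le.mp hcon, hb⟩
      have hx0 : x ∈ U₀ := by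
        simp only [hU₀def, mem_setOf_eq]
        have := hm1 x.1
        have := hm2 x.1
        linarith
      filter_upwards [hU₀open.mem_nhds hx0] with y hy
      exact hzero y (hfz 0 U₀ hU₀open hG0 y hy)
    · -- top: x₂ = f₂ x₁
      have hxf₂ : x.2 = f₂ x.1 := le_antisymm hxcl.2 (not_lt.mp hb)
      have hx2 : x ∈ U₂ := by
        refine ⟨?_, ?_⟩
        · have := hm2 x.1; linarith [hxf₂]
        · rw [hxf₂]
          simp only [sub_self, abs_zero]
          have hden : (0:ℝ) < f₂ x.1 - (f₁ x.1 + f₂ x.1)/2 := by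
            have := hm2 x.1; linarith
          positivity
      filter_upwards [hU₂open.mem_nhds hx2] with y hy
      exact hzero y (hgU₂ y hy)
  · -- flux
    intro x₁
    have hmb : (f₁ x₁ + f₂ x₁)/2 < f₂ x₁ := hm2 x₁
    have ham : f₁ x₁ < (f₁ x₁ + f₂ x₁)/2 := hm1 x₁
    have h1e : (0:ℝ) < 1 + e/2 := by linarith
    obtain ⟨c, hmc, hcb, hbc2⟩ : ∃ c : ℝ, (f₁ x₁ + f₂ x₁)/2 < c ∧ c < f₂ x₁ ∧
        f₂ x₁ - c = (e/2) * (c - (f₁ x₁ + f₂ x₁)/2) := by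
      refine ⟨(f₂ x₁ + (e/2) * ((f₁ x₁ + f₂ x₁)/2)) / (1 + e/2), ?_, ?_, ?_⟩
      · rw [lt_div_iff₀ h1e]
        nlinarith [hmb, he0]
      · rw [div_lt_iff₀ h1e]
        nlinarith [hmb, he0]
      · field_simp
        ring
    have hac : f₁ x₁ ≤ c := by linarith
    have key : ∀ t ∈ Icc c (f₂ x₁), ((x₁, t) : ℝ × ℝ) ∈ U₂ := by
      intro t ht
      refine ⟨by simpa using lt_of_lt_of_le hmc ht.1, ?_⟩
      simp only
      rw [abs_of_nonneg (by linarith [ht.2])]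
      nlinarith [ht.1, ht.2, he0, hmc]
    have hg₁0 : ∀ t ∈ Icc c (f₂ x₁), gfun₁ μ f₁ f₂ ε Φ (x₁, t) = 0 :=
      fun t ht => (hzero _ (hgU₂ _ (key t ht))).1
    have h₂int : IntervalIntegrable (fun t => gfun₁ μ f₁ f₂ ε Φ (x₁, t))
        MeasureTheory.volume c (f₂ x₁) := by
      apply ContinuousOn.intervalIntegrable
      rw [uIcc_of_le hcb.le]
      exact continuousOn_const.congr hg₁0
    have h₁cont : ContinuousOn (fun t => gfun₁ μ f₁ f₂ ε Φ (x₁, t)) (uIcc (f₁ x₁) c) := by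
      rw [uIcc_of_le hac]
      intro t ht
      have htb : t < f₂ x₁ := lt_of_le_of_lt ht.2 hcb
      have hcA : ContinuousAt (fun s : ℝ => gfun₁ μ f₁ f₂ ε Φ (x₁, s)) t :=
        ContinuousAt.comp (f := fun s : ℝ => ((x₁, s) : ℝ × ℝ))
          (g := gfun₁ μ f₁ f₂ ε Φ) (hg₁smooth (x₁, t) htb).continuousAt
          (Continuous.continuousAt (by fun_prop))
      exact hcA.continuousWithinAt
    have h₁int : IntervalIntegrable (fun t => gfun₁ μ f₁ f₂ ε Φ (x₁, t))
        MeasureTheory.volume (f₁ x₁) c := h₁cont.intervalIntegrable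
    have hderiv : ∀ t ∈ uIcc (f₁ x₁) c,
        HasDerivAt (fun s => G (x₁, s)) (gfun₁ μ f₁ f₂ ε Φ (x₁, t)) t := by
      rw [uIcc_of_le hac]
      intro t ht
      have htb : t < f₂ x₁ := lt_of_le_of_lt ht.2 hcb
      have hFd := ((hGs (x₁, t) htb).differentiableAt (by simp)).hasFDerivAt
      have hP : HasDerivAt (fun s : ℝ => ((x₁, s) : ℝ × ℝ)) (0, 1) t :=
        (hasDerivAt_const t x₁).prodMk (hasDerivAt_id t)
      have hcomp := hFd.comp_hasDerivAt t hP
      rw [heqg₁]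
      exact hcomp
    have hFTC : (∫ t in (f₁ x₁)..c, gfun₁ μ f₁ f₂ ε Φ (x₁, t)) = G (x₁, c) - G (x₁, f₁ x₁) :=
      intervalIntegral.integral_eq_sub_of_hasDerivAt hderiv h₁int
    have hmemc : ((x₁, c) : ℝ × ℝ) ∈ U₂ := by
      simp only [hU₂def, mem_setOf_eq]
      refine ⟨hmc, ?_⟩
      rw [abs_of_pos (by linarith : (0:ℝ) < f₂ x₁ - c)]
      nlinarith [hbc2, hmc, he0]
    have hGc : G (x₁, c) = Φ := by
      refine hGΦ _ hmemc ?_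
      show f₂ x₁ ≠ c
      exact ne_of_gt hcb
    have hGa : G (x₁, f₁ x₁) = 0 := by
      apply hG0
      simp only [hU₀def, mem_setOf_eq]
      linarith
    have hI₂ : (∫ t in c..(f₂ x₁), gfun₁ μ f₁ f₂ ε Φ (x₁, t)) = 0 := by
      rw [intervalIntegral.integral_congr (g := fun _ => (0:ℝ))]
      · simp
      · rw [uIcc_of_le hcb.le]
        exact hg₁0
    calc (∫ t in (f₁ x₁)..(f₂ x₁), gfun₁ μ f₁ f₂ ε Φ (x₁, t))
        = (∫ t in (f₁ x₁)..c, gfun₁ μ f₁ f₂ ε Φ (x₁, t))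
          + (∫ t in c..(f₂ x₁), gfun₁ μ f₁ f₂ ε Φ (x₁, t)) :=
          (intervalIntegral.integral_add_adjacent_intervals h₁int h₂int).symm
      _ = Φ := by rw [hFTC, hGc, hGa, hI₂]; ring
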